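/- Let F : ℝ × ℝ → ℝ have a continuous partial derivative F_s(w,s) = ∂F/∂s(w,s), and suppose that for each s₀ > 0 the function w ↦ F_s(w, s₀)/(s₀ − w) is strictly increasing on (−∞, s₀). Let w₁ < w₂ and 0 < s₂ < s₁ with w₂ < s₂. Then ∫_{s₂}^{s₁} F_s(w₂, ξ) · ((ξ − w₁)(s₂ − w₂)) / ((ξ − w₂)(s₂ − w₁)) dξ > ∫_{s₂}^{s₁} F_s(w₁, ξ) · (s₂ − w₂)/(s₂ − w₁) dξ; i.e. the gain Δ from the mass reassignment in the Hobson–Klimmek improvement step is strictly positive. -/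
import Mathlib


open MeasureTheory Set

noncomputable section

/-- The set `M = {(x,y) : y ≥ 0 and y ≥ x}`. -/
def MSet : Set (ℝ × ℝ) := {p : ℝ × ℝ | 0 ≤ p.2 ∧ p.1 ≤ p.2}

/-- A probability measure on `ℝ` is centred if the identity is integrable with mean `0`. -/
def Centred (μ : Measure ℝ) : Prop :=
  Integrable (fun x : ℝ => x) μ ∧ (∫ x, x ∂μ) = 0

/-- Strict supermodularity of a bivariate function. -/
def StrictlySupermodular (F : ℝ × ℝ → ℝ) : Prop :=
  ∀ w₁ w₂ s₁ s₂ : ℝ, w₁ < w₂ → s₁ < s₂ →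
    F (w₁, s₂) + F (w₂, s₁) < F (w₁, s₁) + F (w₂, s₂)

/-- `F` is serrated with ridge `a : ℝ → EReal`: for every `w`, `s ↦ F (w, s)` is
strictly increasing on `{s | s < a w}` and strictly decreasing on `{s | a w < s}`. -/
def SerratedWithRidge (F : ℝ × ℝ → ℝ) (a : ℝ → EReal) : Prop :=
  ∀ w : ℝ,
    StrictMonoOn (fun s : ℝ => F (w, s)) {s : ℝ | (s : EReal) < a w} ∧
    StrictAntiOn (fun s : ℝ => F (w, s)) {s : ℝ | a w < (s : EReal)}

/-- Rogers' conditions for `π` to be the joint law of the terminal value and the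
running maximum of a UI martingale started at `0` with terminal law `μ`. -/
def RogersAdmissible (μ : Measure ℝ) (π : Measure (ℝ × ℝ)) : Prop :=
  Integrable (fun p : ℝ × ℝ => p.1) π ∧
  (∫ p : ℝ × ℝ, p.1 ∂π) = 0 ∧
  π MSetᶜ = 0 ∧
  (∀ s : ℝ, 0 ≤ s →
    s * (π {p : ℝ × ℝ | s ≤ p.2}).toReal ≤ ∫ p in {p : ℝ × ℝ | s ≤ p.2}, p.1 ∂π) ∧
  Measure.map Prod.fst π = μ

/-- The barycenter function of `μ`. -/
def barycenter (μ : Measure ℝ) (w : ℝ) : ℝ :=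
  if 0 < (μ (Ici w)).toReal then (∫ x in Ici w, x ∂μ) / (μ (Ici w)).toReal else w

/-- `g(w) = min(β_μ(w), max(a(w), 0, w))`, the max computed in `EReal`. -/
def ridgeG (μ : Measure ℝ) (a : ℝ → EReal) (w : ℝ) : ℝ :=
  (min ((barycenter μ w : ℝ) : EReal) (max (a w) (max (0 : EReal) ((w : ℝ) : EReal)))).toReal

/-- strict positivity of the gain in the Hobson–Klimmek improvement step. -/
theorem hobson_klimmek_gain_pos (F Fs : ℝ × ℝ → ℝ)
    (hderiv : ∀ w s : ℝ, HasDerivAt (fun t : ℝ => F (w, t)) (Fs (w, s)) s)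
    (hFs_cont : Continuous Fs)
    (hratio : ∀ s₀ : ℝ, 0 < s₀ →
      StrictMonoOn (fun w : ℝ => Fs (w, s₀) / (s₀ - w)) (Iio s₀))
    (w₁ w₂ s₁ s₂ : ℝ) (hw : w₁ < w₂) (hs₂ : 0 < s₂) (hs : s₂ < s₁) (hws : w₂ < s₂) :
    (∫ ξ in s₂..s₁, Fs (w₁, ξ) * ((s₂ - w₂) / (s₂ - w₁))) <
      ∫ ξ in s₂..s₁, Fs (w₂, ξ) * (((ξ - w₁) * (s₂ - w₂)) / ((ξ - w₂) * (s₂ - w₁))) := by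
  have key : ∀ ξ : ℝ, ξ ∈ Icc s₂ s₁ →
      Fs (w₁, ξ) * ((s₂ - w₂) / (s₂ - w₁)) <
        Fs (w₂, ξ) * (((ξ - w₁) * (s₂ - w₂)) / ((ξ - w₂) * (s₂ - w₁))) := by
    intro ξ hξ
    have hξ0 : 0 < ξ := lt_of_lt_of_le hs₂ hξ.1
    have hb : (0:ℝ) < ξ - w₂ := by linarith [hξ.1]
    have ha : (0:ℝ) < ξ - w₁ := by linarith
    have hc : (0:ℝ) < s₂ - w₂ := by linarith
    have hd : (0:ℝ) < s₂ - w₁ := by linarith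
    have h := hratio ξ hξ0 (show w₁ ∈ Iio ξ by simpa using by linarith) (show w₂ ∈ Iio ξ by simpa using hb) hw
    simp only at h
    rw [div_lt_div_iff₀ ha hb] at h
    rw [mul_div_assoc', mul_div_assoc', div_lt_div_iff₀ hd (by positivity)]
    nlinarith [mul_lt_mul_of_pos_right h (mul_pos hc hd)]
  refine intervalIntegral.integral_lt_integral_of_continuousOn_of_le_of_exists_lt hs
    (by fun_prop) ?_ (fun x hx => (key x ⟨hx.1.le, hx.2⟩).le) ⟨s₂, ⟨le_refl _, hs.le⟩, key s₂ ⟨le_refl _, hs.le⟩⟩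
  apply ContinuousOn.mul (Continuous.continuousOn (by fun_prop))
  apply ContinuousOn.div (by fun_prop) (by fun_prop)
  intro x hx
  have : (0:ℝ) < x - w₂ := by linarith [hx.1]
  have : (0:ℝ) < s₂ - w₁ := by linarith
  positivity
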